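/- Let V and H be infinite-dimensional separable complex Hilbert spaces, let i : V → H be an injective, compact, continuous linear map with dense range, and let (λ_n)_{n≥1}, (u_n)_{n≥1} be a spectral system for (V, H, i). Then the generalized Courant–Fischer–Weyl min-max principle holds: for every n ≥ 2, λ_n = max over all (n−1)-dimensional linear subspaces W of V of inf{‖u‖²_V : u ∈ V, ‖i u‖_H = 1, ⟪u, w⟫_V = 0 for all w ∈ W}. -/

import Mathlib

open scoped InnerProductSpace

private lemma aux_norm_sq_sum {E : Type*} [NormedAddCommGroup E] [InnerProductSpace ℂ E]
    {ι : Type*} [Fintype ι] {v : ι → E} (hv : Orthonormal ℂ v) (l : ι → ℂ) :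
    ‖∑ k, l k • v k‖ ^ 2 = ∑ k, ‖l k‖ ^ 2 := by
  have h := hv.inner_sum l l Finset.univ
  have h2 := inner_self_eq_norm_sq (𝕜 := ℂ) (∑ k, l k • v k)
  rw [h, map_sum] at h2
  rw [← h2]
  exact Finset.sum_congr rfl fun k _ => by
    rw [RCLike.conj_mul, ← RCLike.ofReal_pow, RCLike.ofReal_re]

/-- **Generalized Courant–Fischer–Weyl min-max principle** (formula (16) of Theorem 2 of the
paper). Given a spectral system `(lam, u)` for `(V, H, i)` (here indexed from `0`, so `lam n`
is the paper's `λ_{n+1}`), for every `n ≥ 1` the eigenvalue `lam n` is the maximum, over all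
`n`-dimensional linear subspaces `W` of `V`, of
`inf {‖u‖²_V : u ∈ V, ‖i u‖_H = 1, ⟪u, w⟫_V = 0 for all w ∈ W}`. -/
theorem courant_fischer_weyl_minmax
    {V H : Type*}
    [NormedAddCommGroup V] [InnerProductSpace ℂ V] [CompleteSpace V]
    [NormedAddCommGroup H] [InnerProductSpace ℂ H] [CompleteSpace H]
    [TopologicalSpace.SeparableSpace V] [TopologicalSpace.SeparableSpace H]
    (hVinf : ¬ FiniteDimensional ℂ V) (hHinf : ¬ FiniteDimensional ℂ H)
    (i : V →L[ℂ] H) (hinj : Function.Injective i)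
    (hcomp : IsCompactOperator i) (hdense : DenseRange i)
    (lam : ℕ → ℝ) (u : ℕ → V)
    (hmono : Monotone lam) (hpos : ∀ n, 0 < lam n)
    (htend : Filter.Tendsto lam Filter.atTop Filter.atTop)
    (hbasis : ∃ b : HilbertBasis ℕ ℂ H, ∀ n, b n = i (u n))
    (heigen : ∀ n, ∀ v : V, ⟪u n, v⟫_ℂ = (lam n : ℂ) * ⟪i (u n), i v⟫_ℂ) :
    ∀ n : ℕ, 1 ≤ n →
      IsGreatest
        {c : ℝ | ∃ W : Submodule ℂ V, Module.finrank ℂ W = n ∧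
          c = sInf {r : ℝ | ∃ w : V, ‖i w‖ = 1 ∧ (∀ v ∈ W, ⟪w, v⟫_ℂ = 0) ∧ r = ‖w‖ ^ 2}}
        (lam n) := by
  classical
  obtain ⟨b, hb⟩ := hbasis
  have hlamne : ∀ k, (lam k : ℂ) ≠ 0 := fun k => by exact_mod_cast (hpos k).ne'
  have hsqrt : ∀ k, Real.sqrt (lam k) ≠ 0 := fun k => (Real.sqrt_pos.mpr (hpos k)).ne'
  have hsqrtC : ∀ k, ((Real.sqrt (lam k) : ℝ) : ℂ) ≠ 0 := fun k => by
    exact_mod_cast hsqrt k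
  have huu : ∀ j k, ⟪u j, u k⟫_ℂ = if j = k then (lam j : ℂ) else 0 := by
    intro j k
    rw [heigen j (u k), ← hb j, ← hb k, orthonormal_iff_ite.mp b.orthonormal j k]
    split <;> simp
  set e : ℕ → V := fun k => (((Real.sqrt (lam k) : ℝ) : ℂ))⁻¹ • u k with he_def
  have hue : ∀ k, u k = ((Real.sqrt (lam k) : ℝ) : ℂ) • e k := by
    intro k
    rw [he_def]
    simp [smul_smul, mul_inv_cancel₀ (hsqrtC k)]
  have he : Orthonormal ℂ e := by
    rw [orthonormal_iff_ite]
    intro j k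
    simp only [he_def, inner_smul_left, inner_smul_right, huu j k, map_inv₀,
      Complex.conj_ofReal]
    split
    · rename_i h; subst h
      have hr : ((Real.sqrt (lam j))⁻¹ * ((Real.sqrt (lam j))⁻¹ * lam j) : ℝ) = 1 := by
        rw [← Real.mul_self_sqrt (hpos j).le]
        field_simp [hsqrt j]
        rw [Real.sqrt_sq (Real.sqrt_nonneg _)]
      calc (((Real.sqrt (lam j) : ℝ) : ℂ))⁻¹ * ((((Real.sqrt (lam j) : ℝ) : ℂ))⁻¹ * (lam j : ℂ))
          = (((Real.sqrt (lam j))⁻¹ * ((Real.sqrt (lam j))⁻¹ * lam j) : ℝ) : ℂ) := by push_cast; ring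
        _ = 1 := by rw [hr]; norm_num
    · simp
  have hnu : ∀ k, ‖u k‖ ^ 2 = lam k := by
    intro k
    have h1 : (⟪u k, u k⟫_ℂ) = (lam k : ℂ) := by simpa using huu k k
    have h2 := inner_self_eq_norm_sq (𝕜 := ℂ) (u k)
    rw [h1] at h2
    simpa using h2.symm
  intro n hn
  constructor
  · -- membership: the span of e 0, ..., e (n-1) attains the value lam n
    refine ⟨Submodule.span ℂ (Set.range fun k : Fin n => e (k : ℕ)), ?_, ?_⟩
    · have hli : LinearIndependent ℂ (fun k : Fin n => e (k : ℕ)) :=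
        (he.comp (fun k : Fin n => (k : ℕ)) Fin.val_injective).linearIndependent
      rw [finrank_span_eq_card hli]
      simp
    · set W₀ := Submodule.span ℂ (Set.range fun k : Fin n => e (k : ℕ)) with hW₀
      set S := {r : ℝ | ∃ w : V, ‖i w‖ = 1 ∧ (∀ v ∈ W₀, ⟪w, v⟫_ℂ = 0) ∧ r = ‖w‖ ^ 2} with hS
      have hmemS : lam n ∈ S := by
        refine ⟨u n, ?_, ?_, (hnu n).symm⟩
        · rw [← hb n]; exact b.orthonormal.1 n
        · intro v hv
          induction hv using Submodule.span_induction with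
          | mem x hx =>
            obtain ⟨k, rfl⟩ := hx
            simp only [he_def, inner_smul_right, huu n (k : ℕ)]
            rw [if_neg (ne_of_gt k.isLt)]
            simp
          | zero => simp
          | add x y hx hy ihx ihy => rw [inner_add_right, ihx, ihy, add_zero]
          | smul a x hx ih => rw [inner_smul_right, ih, mul_zero]
      have hlb : ∀ r ∈ S, lam n ≤ r := by
        rintro r ⟨w, hw1, hw2, rfl⟩
        set c : ℕ → ℂ := fun k => ⟪i (u k), i w⟫_ℂ with hc
        have hcw : ∀ k, ⟪u k, w⟫_ℂ = (lam k : ℂ) * c k := fun k => heigen k w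
        have hc0 : ∀ k, k < n → c k = 0 := by
          intro k hk
          have hek : e k ∈ W₀ := Submodule.subset_span ⟨⟨k, hk⟩, rfl⟩
          have h1 : ⟪w, u k⟫_ℂ = 0 := by
            rw [hue k, inner_smul_right, hw2 _ hek, mul_zero]
          have h2 : ⟪u k, w⟫_ℂ = 0 := by
            rw [← inner_conj_symm, h1, map_zero]
          have h3 := (hcw k).symm.trans h2
          exact (mul_eq_zero.mp h3).resolve_left (hlamne k)
        have hps : HasSum (fun k => ‖c k‖ ^ 2) 1 := by
          have h := b.hasSum_inner_mul_inner (i w) (i w)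
          have ht : ∀ k : ℕ, (⟪i w, b k⟫_ℂ * ⟪b k, i w⟫_ℂ).re = ‖c k‖ ^ 2 := by
            intro k
            rw [hb k, ← inner_conj_symm (i w) (i (u k)),
              ← Complex.normSq_eq_conj_mul_self]
            simp [hc, Complex.normSq_eq_norm_sq, ← Complex.ofReal_pow]
          have h5 : (⟪i w, i w⟫_ℂ).re = 1 := by
            have h6 := inner_self_eq_norm_sq (𝕜 := ℂ) (i w)
            rw [hw1] at h6
            simpa using h6
          have h' := Complex.hasSum_re h
          rw [funext ht, h5] at h'
          exact h' 
        have hsum1 : Summable fun k => ‖c k‖ ^ 2 := hps.summable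
        have hip : ∀ k, ‖⟪e k, w⟫_ℂ‖ ^ 2 = lam k * ‖c k‖ ^ 2 := by
          intro k
          have hnorm : ‖⟪e k, w⟫_ℂ‖ = (Real.sqrt (lam k))⁻¹ * (lam k * ‖c k‖) := by
            simp only [he_def, inner_smul_left, map_inv₀, Complex.conj_ofReal, hcw k]
            rw [norm_mul, norm_mul, norm_inv]
            simp [Real.norm_eq_abs, abs_of_nonneg (Real.sqrt_nonneg _), abs_of_pos (hpos k),
              Complex.norm_real]
          rw [hnorm, mul_pow, mul_pow, inv_pow, Real.sq_sqrt (hpos k).le]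
          field_simp [(hpos k).ne']
        have hsum2 : Summable fun k => lam k * ‖c k‖ ^ 2 :=
          (he.inner_products_summable w).congr hip
        have hbessel : ∑' k, lam k * ‖c k‖ ^ 2 ≤ ‖w‖ ^ 2 := by
          calc ∑' k, lam k * ‖c k‖ ^ 2 = ∑' k, ‖⟪e k, w⟫_ℂ‖ ^ 2 :=
                tsum_congr fun k => (hip k).symm
            _ ≤ ‖w‖ ^ 2 := he.tsum_inner_products_le w
        have hlow : lam n * 1 ≤ ∑' k, lam k * ‖c k‖ ^ 2 := by
          rw [← hps.tsum_eq, ← tsum_mul_left]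
          refine (hsum1.mul_left _).tsum_le_tsum ?_ hsum2
          intro k
          rcases lt_or_ge k n with hk | hk
          · simp [hc0 k hk]
          · exact mul_le_mul_of_nonneg_right (hmono hk) (by positivity)
        linarith
      have hbdd : BddBelow S := ⟨0, by rintro r ⟨w, _, _, rfl⟩; positivity⟩
      exact le_antisymm (le_csInf ⟨lam n, hmemS⟩ hlb) (csInf_le hbdd hmemS)
  · -- upper bound
    rintro c ⟨W, hWrank, rfl⟩
    haveI : FiniteDimensional ℂ W :=
      Module.finite_of_finrank_pos (by rw [hWrank]; omega)
    let f : (Fin (n + 1) → ℂ) →ₗ[ℂ] V :=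
      { toFun := fun a => ∑ k, a k • u (k : ℕ)
        map_add' := by intro a b'; simp [add_smul, Finset.sum_add_distrib]
        map_smul' := by intro m a; simp [smul_smul, Finset.smul_sum] }
    let g := (W.orthogonalProjectionOnto).toLinearMap.comp f
    have hker : LinearMap.ker g ≠ ⊥ := by
      apply LinearMap.ker_ne_bot_of_finrank_lt
      rw [hWrank, Module.finrank_fintype_fun_eq_card]
      simp
    rw [Submodule.ne_bot_iff] at hker
    obtain ⟨a, hag, ha0⟩ := hker
    have hfa_orth : f a ∈ Wᗮ := by
      have h1 : W.orthogonalProjectionOnto (f a) = 0 := LinearMap.mem_ker.mp hag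
      exact Submodule.orthogonalProjectionOnto_eq_zero_iff.mp h1
    have hiu : i (f a) = ∑ k : Fin (n + 1), a k • b (k : ℕ) := by
      show i (∑ k : Fin (n + 1), a k • u (k : ℕ)) = _
      rw [map_sum]
      exact Finset.sum_congr rfl fun k _ => by rw [map_smul, hb]
    have hob : Orthonormal ℂ (fun k : Fin (n + 1) => b (k : ℕ)) :=
      b.orthonormal.comp (fun k : Fin (n + 1) => (k : ℕ)) Fin.val_injective
    have hoe : Orthonormal ℂ (fun k : Fin (n + 1) => e (k : ℕ)) :=
      he.comp (fun k : Fin (n + 1) => (k : ℕ)) Fin.val_injective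
    have hnormH : ‖i (f a)‖ ^ 2 = ∑ k, ‖a k‖ ^ 2 := by
      rw [hiu]
      exact aux_norm_sq_sum hob a
    have hfae : f a = ∑ k : Fin (n + 1), (a k * ((Real.sqrt (lam (k : ℕ)) : ℝ) : ℂ)) • e (k : ℕ) := by
      show (∑ k : Fin (n + 1), a k • u (k : ℕ)) = _
      exact Finset.sum_congr rfl fun k _ => by rw [hue (k : ℕ), smul_smul]
    have hnormV : ‖f a‖ ^ 2 = ∑ k : Fin (n + 1), ‖a k‖ ^ 2 * lam (k : ℕ) := by
      rw [hfae, aux_norm_sq_sum hoe]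
      refine Finset.sum_congr rfl fun k _ => ?_
      rw [norm_mul, mul_pow]
      congr 1
      rw [Complex.norm_real, Real.norm_eq_abs, abs_of_nonneg (Real.sqrt_nonneg _),
        Real.sq_sqrt (hpos (k : ℕ)).le]
    have hcmp : ‖f a‖ ^ 2 ≤ lam n * ‖i (f a)‖ ^ 2 := by
      rw [hnormV, hnormH, Finset.mul_sum]
      refine Finset.sum_le_sum fun k _ => ?_
      have hk : lam (k : ℕ) ≤ lam n := hmono (Nat.lt_succ_iff.mp k.isLt)
      have := sq_nonneg ‖a k‖
      nlinarith
    have hfane : f a ≠ 0 := by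
      obtain ⟨k, hk⟩ := Function.ne_iff.mp ha0
      intro h
      have h1 : ‖f a‖ ^ 2 = 0 := by rw [h]; simp
      rw [hnormV] at h1
      have h2 : (0 : ℝ) < ∑ k : Fin (n + 1), ‖a k‖ ^ 2 * lam (k : ℕ) := by
        refine Finset.sum_pos' (fun j _ => mul_nonneg (sq_nonneg _) (hpos _).le)
          ⟨k, Finset.mem_univ k, ?_⟩
        exact mul_pos (pow_pos (norm_pos_iff.mpr hk) 2) (hpos (k : ℕ))
      linarith
    have hifane : i (f a) ≠ 0 := fun h => hfane (hinj (by rw [h, map_zero]))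
    set t := ‖i (f a)‖ with ht
    have htpos : 0 < t := norm_pos_iff.mpr hifane
    set w : V := ((t : ℂ))⁻¹ • f a with hw
    have hiw : ‖i w‖ = 1 := by
      rw [hw, map_smul, norm_smul, norm_inv, Complex.norm_real, Real.norm_eq_abs,
        abs_of_pos htpos, ← ht]
      field_simp
    have hworth : ∀ v ∈ W, ⟪w, v⟫_ℂ = 0 := by
      intro v hv
      have h1 : ⟪v, f a⟫_ℂ = 0 := (Submodule.mem_orthogonal W (f a)).mp hfa_orth v hv
      have h2 : ⟪f a, v⟫_ℂ = 0 := by rw [← inner_conj_symm, h1, map_zero]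
      rw [hw, inner_smul_left, h2, mul_zero]
    have hwnorm : ‖w‖ ^ 2 ≤ lam n := by
      have h1 : ‖w‖ = t⁻¹ * ‖f a‖ := by
        rw [hw, norm_smul, norm_inv, Complex.norm_real, Real.norm_eq_abs, abs_of_pos htpos]
      rw [h1, mul_pow]
      calc t⁻¹ ^ 2 * ‖f a‖ ^ 2 ≤ t⁻¹ ^ 2 * (lam n * t ^ 2) := by
            apply mul_le_mul_of_nonneg_left _ (by positivity)
            rw [ht]; exact hcmp
        _ = lam n := by field_simp
    have hbdd : BddBelow {r : ℝ | ∃ w : V, ‖i w‖ = 1 ∧ (∀ v ∈ W, ⟪w, v⟫_ℂ = 0) ∧ r = ‖w‖ ^ 2} :=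
      ⟨0, by rintro r ⟨x, _, _, rfl⟩; positivity⟩
    exact le_trans (csInf_le hbdd ⟨w, hiw, hworth, rfl⟩) hwnorm
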